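/- Let g be a finite-dimensional real Lie algebra which is not abelian. Then there exists an inner product on g such that the scalar curvature tr(Ric) of the corresponding metric Lie algebra is negative. -/

import Mathlib

open Finset

set_option linter.unusedSectionVars false
set_option maxHeartbeats 1000000

noncomputable section

variable {V : Type*} [AddCommGroup V] [Module ℝ V] {ι : Type*} [Fintype ι] [DecidableEq ι]

/-- The inner product on `V` making the basis `b` orthonormal. -/
def bip (b : Module.Basis ι ℝ V) (x y : V) : ℝ := ∑ i, b.repr x i * b.repr y i

/-- The element `H` with `⟨H, X⟩ = tr (ad_μ X)` for the inner product of `b`. -/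
def ricH (b : Module.Basis ι ℝ V) (μ : V →ₗ[ℝ] V →ₗ[ℝ] V) : V :=
  ∑ i, (LinearMap.trace ℝ V (μ (b i))) • b i

/-- The Ricci curvature form of the metric Lie algebra `(V, μ, bip b)`. -/
def ricciForm (b : Module.Basis ι ℝ V) (μ : V →ₗ[ℝ] V →ₗ[ℝ] V) (X Y : V) : ℝ :=
  -(1/2) * ∑ i, ∑ j, bip b (μ X (b i)) (b j) * bip b (μ Y (b i)) (b j)
  + (1/4) * ∑ i, ∑ j, bip b (μ (b i) (b j)) X * bip b (μ (b i) (b j)) Y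
  - (1/2) * (LinearMap.trace ℝ V ((μ X) ∘ₗ (μ Y)))
  - (1/2) * (bip b (μ (ricH b μ) X) Y + bip b (μ (ricH b μ) Y) X)

/-- The Ricci operator of `(V, μ, bip b)` is negative definite. -/
def RicciNegDef (b : Module.Basis ι ℝ V) (μ : V →ₗ[ℝ] V →ₗ[ℝ] V) : Prop :=
  ∀ X : V, X ≠ 0 → ricciForm b μ X X < 0

/-- The Lie bracket of a Lie algebra `g`, as a bilinear map. -/
def adL (g : Type*) [LieRing g] [LieAlgebra ℝ g] : g →ₗ[ℝ] g →ₗ[ℝ] g :=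
  LinearMap.mk₂ ℝ (fun x y => ⁅x, y⁆) (fun x x' y => add_lie x x' y)
    (fun a x y => smul_lie a x y) (fun x y y' => lie_add x y y')
    (fun a x y => lie_smul a x y)

/-! ### Auxiliary lemmas -/

lemma adL_apply {g : Type*} [LieRing g] [LieAlgebra ℝ g] (x y : g) : adL g x y = ⁅x, y⁆ := rfl

lemma bip_basis_right (b : Module.Basis ι ℝ V) (v : V) (j : ι) : bip b v (b j) = b.repr v j := by
  rw [bip, Finset.sum_eq_single j]
  · simp
  · intro i _ hij
    simp [Module.Basis.repr_self, Finsupp.single_apply, Ne.symm hij]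
  · intro h; exact absurd (Finset.mem_univ j) h

lemma trace_eq_sum_repr (b : Module.Basis ι ℝ V) (f : V →ₗ[ℝ] V) :
    LinearMap.trace ℝ V f = ∑ i, b.repr (f (b i)) i := by
  rw [LinearMap.trace_eq_matrix_trace ℝ b f]
  simp [Matrix.trace, Matrix.diag, LinearMap.toMatrix_apply]

lemma repr_map (b : Module.Basis ι ℝ V) (f : V →ₗ[ℝ] V) (v : V) (i : ι) :
    b.repr (f v) i = ∑ j, b.repr v j * b.repr (f (b j)) i := by
  conv_lhs => rw [← b.sum_repr v]
  rw [map_sum, map_sum, Finsupp.coe_finset_sum, Finset.sum_apply]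
  refine Finset.sum_congr rfl fun j _ => ?_
  rw [map_smul, map_smul, Finsupp.smul_apply, smul_eq_mul]

lemma trace_comp_eq (b : Module.Basis ι ℝ V) (μ : V →ₗ[ℝ] V →ₗ[ℝ] V) (l : ι) :
    LinearMap.trace ℝ V ((μ (b l)) ∘ₗ (μ (b l)))
      = ∑ i, ∑ j, b.repr (μ (b l) (b i)) j * b.repr (μ (b l) (b j)) i := by
  rw [trace_eq_sum_repr b]
  refine Finset.sum_congr rfl fun i _ => ?_
  rw [LinearMap.comp_apply, repr_map b (μ (b l)) (μ (b l) (b i)) i]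

lemma bip_H_eq (b : Module.Basis ι ℝ V) (μ : V →ₗ[ℝ] V →ₗ[ℝ] V) (l : ι) :
    bip b (μ (ricH b μ) (b l)) (b l)
      = ∑ i, (LinearMap.trace ℝ V (μ (b i))) * b.repr (μ (b i) (b l)) l := by
  rw [bip_basis_right, ricH, map_sum, LinearMap.sum_apply, map_sum, Finsupp.coe_finset_sum,
    Finset.sum_apply]
  refine Finset.sum_congr rfl fun i _ => ?_
  rw [map_smul, LinearMap.smul_apply, map_smul, Finsupp.smul_apply, smul_eq_mul]

lemma ricci_basis_diag (b : Module.Basis ι ℝ V) (μ : V →ₗ[ℝ] V →ₗ[ℝ] V) (l : ι) :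
    ricciForm b μ (b l) (b l)
      = -(1/2) * (∑ i, ∑ j, b.repr (μ (b l) (b i)) j * b.repr (μ (b l) (b i)) j)
        + (1/4) * (∑ i, ∑ j, b.repr (μ (b i) (b j)) l * b.repr (μ (b i) (b j)) l)
        - (1/2) * (∑ i, ∑ j, b.repr (μ (b l) (b i)) j * b.repr (μ (b l) (b j)) i)
        - ∑ i, (LinearMap.trace ℝ V (μ (b i))) * b.repr (μ (b i) (b l)) l := by
  rw [ricciForm, trace_comp_eq, bip_H_eq]
  simp only [bip_basis_right]
  ring

lemma sum_comm3 (f : ι → ι → ι → ℝ) :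
    ∑ l, ∑ i, ∑ j, f i j l = ∑ i, ∑ j, ∑ l, f i j l := by
  rw [Finset.sum_comm]
  exact Finset.sum_congr rfl fun i _ => Finset.sum_comm

/-- The scalar curvature of `(V, μ, bip b)` in terms of the structure constants of `μ`
relative to the basis `b`. -/
lemma scal_formula (b : Module.Basis ι ℝ V) (μ : V →ₗ[ℝ] V →ₗ[ℝ] V) :
    ∑ l, ricciForm b μ (b l) (b l)
      = -(1/4) * (∑ i, ∑ j, ∑ k, b.repr (μ (b i) (b j)) k * b.repr (μ (b i) (b j)) k)
        - (1/2) * (∑ k, ∑ i, ∑ j, b.repr (μ (b k) (b i)) j * b.repr (μ (b k) (b j)) i)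
        - ∑ i, ((∑ j, b.repr (μ (b i) (b j)) j) * (∑ j, b.repr (μ (b i) (b j)) j)) := by
  simp only [ricci_basis_diag]
  rw [Finset.sum_sub_distrib, Finset.sum_sub_distrib, Finset.sum_add_distrib,
    ← Finset.mul_sum, ← Finset.mul_sum, ← Finset.mul_sum]
  have h2 : ∑ l, ∑ i, ∑ j, b.repr (μ (b i) (b j)) l * b.repr (μ (b i) (b j)) l
      = ∑ i, ∑ j, ∑ k, b.repr (μ (b i) (b j)) k * b.repr (μ (b i) (b j)) k :=
    sum_comm3 _
  have h4 : ∑ l, ∑ i, (LinearMap.trace ℝ V (μ (b i))) * b.repr (μ (b i) (b l)) l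
      = ∑ i, ((∑ j, b.repr (μ (b i) (b j)) j) * (∑ j, b.repr (μ (b i) (b j)) j)) := by
    rw [Finset.sum_comm]
    refine Finset.sum_congr rfl fun i _ => ?_
    rw [← Finset.mul_sum, trace_eq_sum_repr b (μ (b i))]
  rw [h2, h4]
  ring

lemma triple_single_le (f : ι → ι → ι → ℝ) (h : ∀ i j k, 0 ≤ f i j k) (i0 j0 k0 : ι) :
    f i0 j0 k0 ≤ ∑ i, ∑ j, ∑ k, f i j k := by
  calc f i0 j0 k0 ≤ ∑ k, f i0 j0 k :=
        Finset.single_le_sum (f := fun k => f i0 j0 k) (fun k _ => h _ _ _) (mem_univ _)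
    _ ≤ ∑ j, ∑ k, f i0 j k :=
        Finset.single_le_sum (f := fun j => ∑ k, f i0 j k)
          (fun j _ => Finset.sum_nonneg fun k _ => h _ _ _) (mem_univ _)
    _ ≤ ∑ i, ∑ j, ∑ k, f i j k :=
        Finset.single_le_sum (f := fun i => ∑ j, ∑ k, f i j k)
          (fun i _ => Finset.sum_nonneg fun j _ => Finset.sum_nonneg fun k _ => h _ _ _)
          (mem_univ _)

lemma triple_sum_le (f g : ι → ι → ι → ℝ) (h : ∀ i j k, f i j k ≤ g i j k) :
    ∑ i, ∑ j, ∑ k, f i j k ≤ ∑ i, ∑ j, ∑ k, g i j k :=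
  Finset.sum_le_sum fun i _ => Finset.sum_le_sum fun j _ => Finset.sum_le_sum fun k _ => h i j k

/-- If all "mixed" products of structure constants are nonnegative and some structure constant
is nonzero, the scalar curvature is negative. -/
lemma scal_neg_of_pointwise (b : Module.Basis ι ℝ V) (μ : V →ₗ[ℝ] V →ₗ[ℝ] V)
    (hpt : ∀ k i j, 0 ≤ b.repr (μ (b k) (b i)) j * b.repr (μ (b k) (b j)) i)
    (i0 j0 k0 : ι) (hγ : b.repr (μ (b i0) (b j0)) k0 ≠ 0) :
    ∑ l, ricciForm b μ (b l) (b l) < 0 := by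
  rw [scal_formula]
  have hA : b.repr (μ (b i0) (b j0)) k0 * b.repr (μ (b i0) (b j0)) k0
      ≤ ∑ i, ∑ j, ∑ k, b.repr (μ (b i) (b j)) k * b.repr (μ (b i) (b j)) k :=
    triple_single_le (fun i j k => b.repr (μ (b i) (b j)) k * b.repr (μ (b i) (b j)) k)
      (fun i j k => mul_self_nonneg _) i0 j0 k0
  have hγ2 : 0 < b.repr (μ (b i0) (b j0)) k0 * b.repr (μ (b i0) (b j0)) k0 :=
    mul_self_pos.mpr hγ
  have hB : 0 ≤ ∑ k, ∑ i, ∑ j, b.repr (μ (b k) (b i)) j * b.repr (μ (b k) (b j)) i :=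
    Finset.sum_nonneg fun k _ => Finset.sum_nonneg fun i _ => Finset.sum_nonneg fun j _ =>
      hpt k i j
  have hC : 0 ≤ ∑ i, ((∑ j, b.repr (μ (b i) (b j)) j) * (∑ j, b.repr (μ (b i) (b j)) j)) :=
    Finset.sum_nonneg fun i _ => mul_self_nonneg _
  linarith

lemma repr_unitsSMul_mul (b : Module.Basis ι ℝ V) (μ : V →ₗ[ℝ] V →ₗ[ℝ] V) (c : ι → ℝˣ) (i j k : ι) :
    (b.unitsSMul c).repr (μ ((b.unitsSMul c) i) ((b.unitsSMul c) j)) k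
      = (c i : ℝ) * (c j : ℝ) * ((c k : ℝ))⁻¹ * b.repr (μ (b i) (b j)) k := by
  have h1 : μ ((c i : ℝ) • b i) ((c j : ℝ) • b j)
      = ((c i : ℝ) * (c j : ℝ)) • μ (b i) (b j) := by
    rw [map_smul, LinearMap.map_smul₂, smul_smul, mul_comm]
  rw [Module.Basis.repr_unitsSMul, Module.Basis.unitsSMul_apply, Module.Basis.unitsSMul_apply]
  simp only [Units.smul_def]
  rw [h1, map_smul, Finsupp.smul_apply]
  simp only [smul_eq_mul, Units.val_inv_eq_inv_val]
  ring

/-- The squeezing argument: if some structure constant `α_{i0 j0 k0}` with `k0 ∉ {i0, j0}` is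
nonzero, then shrinking the basis vector `b k0` produces a basis (hence an inner product) with
negative scalar curvature. -/
lemma exists_scaled_neg (b : Module.Basis ι ℝ V) (μ : V →ₗ[ℝ] V →ₗ[ℝ] V) (i0 j0 k0 : ι)
    (hki : i0 ≠ k0) (hkj : j0 ≠ k0) (hγ : b.repr (μ (b i0) (b j0)) k0 ≠ 0) :
    ∃ b' : Module.Basis ι ℝ V, ∑ l, ricciForm b' μ (b' l) (b' l) < 0 := by
  set β : ι → ι → ι → ℝ := fun i j k => b.repr (μ (b i) (b j)) k with hβ
  set γ : ℝ := β i0 j0 k0 with hγdef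
  set M : ℝ := ∑ k, ∑ i, ∑ j, |β k i j * β k j i| with hM
  have hM0 : 0 ≤ M :=
    Finset.sum_nonneg fun k _ => Finset.sum_nonneg fun i _ => Finset.sum_nonneg fun j _ =>
      abs_nonneg _
  have hγ2 : 0 < γ * γ := mul_self_pos.mpr hγ
  set q : ℝ := min 1 (γ * γ / (2 * M + 2)) with hq
  have hq0 : 0 < q := lt_min one_pos (by positivity)
  set s : ℝ := Real.sqrt q with hsdef
  have hs0 : 0 < s := Real.sqrt_pos.mpr hq0
  have hss : s * s = q := Real.mul_self_sqrt hq0.le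
  have hs1 : s ≤ 1 := by
    rw [show (1:ℝ) = Real.sqrt 1 by simp [Real.sqrt_one]]
    exact Real.sqrt_le_sqrt (min_le_left _ _)
  set c : ι → ℝˣ := fun l => if l = k0 then Units.mk0 s hs0.ne' else 1 with hc
  set e : ι → ℝ := fun l => (c l : ℝ) with he
  have he_pos : ∀ l, 0 < e l := by
    intro l; by_cases h : l = k0 <;> simp [he, hc, h, hs0]
  have he_le : ∀ l, e l ≤ 1 := by
    intro l; by_cases h : l = k0 <;> simp [he, hc, h, hs1]
  have he_ne : ∀ l, e l ≠ 0 := fun l => (he_pos l).ne'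
  have hek0 : e k0 = s := by simp [he, hc]
  have hei0 : e i0 = 1 := by simp [he, hc, hki]
  have hej0 : e j0 = 1 := by simp [he, hc, hkj]
  refine ⟨b.unitsSMul c, ?_⟩
  rw [scal_formula]
  simp only [repr_unitsSMul_mul b μ c, ← he, ← hβ]
  have hA : γ * γ / (s * s)
      ≤ ∑ i, ∑ j, ∑ k, (e i * e j * (e k)⁻¹ * β i j k) * (e i * e j * (e k)⁻¹ * β i j k) := by
    have hterm : (e i0 * e j0 * (e k0)⁻¹ * β i0 j0 k0) * (e i0 * e j0 * (e k0)⁻¹ * β i0 j0 k0)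
        = γ * γ / (s * s) := by
      rw [hei0, hej0, hek0, ← hγdef]
      field_simp
    rw [← hterm]
    exact triple_single_le
      (fun i j k => (e i * e j * (e k)⁻¹ * β i j k) * (e i * e j * (e k)⁻¹ * β i j k))
      (fun i j k => mul_self_nonneg _) i0 j0 k0
  have hB : -M ≤ ∑ k, ∑ i, ∑ j,
      (e k * e i * (e j)⁻¹ * β k i j) * (e k * e j * (e i)⁻¹ * β k j i) := by
    have heq : ∑ k, ∑ i, ∑ j, -|β k i j * β k j i| = -M := by
      rw [hM]
      simp only [Finset.sum_neg_distrib]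
    rw [← heq]
    refine triple_sum_le _ _ fun k i j => ?_
    have hrw : (e k * e i * (e j)⁻¹ * β k i j) * (e k * e j * (e i)⁻¹ * β k j i)
        = (e k * e k) * (β k i j * β k j i) := by
      field_simp [he_ne i, he_ne j]
    rw [hrw]
    rcases le_or_gt 0 (β k i j * β k j i) with hp | hp
    · have : 0 ≤ (e k * e k) * (β k i j * β k j i) :=
        mul_nonneg (mul_nonneg (he_pos k).le (he_pos k).le) hp
      linarith [abs_nonneg (β k i j * β k j i)]
    · have h1 : e k * e k ≤ 1 := by
        nlinarith [he_pos k, he_le k]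
      have : (e k * e k) * (β k i j * β k j i) ≥ 1 * (β k i j * β k j i) := by
        nlinarith [he_pos k]
      rw [abs_of_neg hp]
      linarith
  have hC : 0 ≤ ∑ i, ((∑ j, e i * e j * (e j)⁻¹ * β i j j) * (∑ j, e i * e j * (e j)⁻¹ * β i j j)) :=
    Finset.sum_nonneg fun i _ => mul_self_nonneg _
  have hqle : q ≤ γ * γ / (2 * M + 2) := min_le_right _ _
  have hfinal : 2 * M + 2 ≤ γ * γ / (s * s) := by
    rw [hss]
    rw [le_div_iff₀ hq0]
    calc (2 * M + 2) * q ≤ (2 * M + 2) * (γ * γ / (2 * M + 2)) := by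
          apply mul_le_mul_of_nonneg_left hqle (by linarith)
      _ = γ * γ := by field_simp
  linarith

/-- **(Milnor)** Every non-abelian Lie algebra admits an inner product of negative scalar
curvature (the scalar curvature being the trace of the Ricci operator). -/
theorem exists_negative_scalar_curvature_of_nonabelian
    (g : Type*) [LieRing g] [LieAlgebra ℝ g] [FiniteDimensional ℝ g]
    (hnab : ∃ X Y : g, ⁅X, Y⁆ ≠ 0) :
    ∃ b : Module.Basis (Fin (Module.finrank ℝ g)) ℝ g,
      ∑ i, ricciForm b (adL g) (b i) (b i) < 0 := by
  classical
  by_cases hcase : ∃ x y : g, ⁅x, y⁆ ∉ Submodule.span ℝ {x, y}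
  · -- Case 1: some bracket leaves the span of its arguments
    obtain ⟨x, y, hw⟩ := hcase
    have hy0 : y ≠ 0 := by
      rintro rfl
      exact hw (by simp)
    have hxy : x ∉ Submodule.span ℝ ({y} : Set g) := by
      intro hx
      obtain ⟨a, ha⟩ := Submodule.mem_span_singleton.mp hx
      apply hw
      rw [← ha, smul_lie, lie_self, smul_zero]
      exact zero_mem _
    have h1 : LinearIndepOn ℝ id ({y} : Set g) :=
      LinearIndepOn.singleton (v := id) hy0
    have h2 : LinearIndepOn ℝ id (insert x {y} : Set g) :=
      h1.id_insert hxy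
    have h3 : LinearIndepOn ℝ id (insert ⁅x, y⁆ (insert x {y}) : Set g) :=
      h2.id_insert hw
    set S : Set g := insert ⁅x, y⁆ (insert x {y}) with hS
    set B0 := Module.Basis.extend h3 with hB0
    haveI : Fintype (h3.extend (Set.subset_univ S)) := FiniteDimensional.fintypeBasisIndex B0
    have hcard : Fintype.card (h3.extend (Set.subset_univ S)) = Module.finrank ℝ g :=
      (Module.finrank_eq_card_basis B0).symm
    let e := Fintype.equivFinOfCardEq hcard
    set b := B0.reindex e with hb
    have hsub : S ⊆ h3.extend (Set.subset_univ S) := h3.subset_extend _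
    have hxS : x ∈ S := Set.mem_insert_of_mem _ (Set.mem_insert _ _)
    have hyS : y ∈ S := Set.mem_insert_of_mem _ (Set.mem_insert_of_mem _ rfl)
    have hwS : ⁅x, y⁆ ∈ S := Set.mem_insert _ _
    set i0 := e ⟨x, hsub hxS⟩ with hi0
    set j0 := e ⟨y, hsub hyS⟩ with hj0
    set k0 := e ⟨⁅x, y⁆, hsub hwS⟩ with hk0
    have hbx : b i0 = x := by
      rw [hb, Module.Basis.reindex_apply, hi0, Equiv.symm_apply_apply, hB0, Module.Basis.extend_apply_self]
    have hby : b j0 = y := by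
      rw [hb, Module.Basis.reindex_apply, hj0, Equiv.symm_apply_apply, hB0, Module.Basis.extend_apply_self]
    have hbw : b k0 = ⁅x, y⁆ := by
      rw [hb, Module.Basis.reindex_apply, hk0, Equiv.symm_apply_apply, hB0, Module.Basis.extend_apply_self]
    have hxw : x ≠ ⁅x, y⁆ := by
      intro h
      exact hw (h ▸ Submodule.subset_span (Set.mem_insert _ _))
    have hyw : y ≠ ⁅x, y⁆ := by
      intro h
      exact hw (h ▸ Submodule.subset_span (Set.mem_insert_of_mem _ rfl))
    have hik : i0 ≠ k0 := by
      intro h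
      exact hxw (Subtype.mk.inj (e.injective h))
    have hjk : j0 ≠ k0 := by
      intro h
      exact hyw (Subtype.mk.inj (e.injective h))
    have hγ : b.repr (adL g (b i0) (b j0)) k0 ≠ 0 := by
      rw [adL_apply, hbx, hby, ← hbw, Module.Basis.repr_self]
      simp
    exact exists_scaled_neg b (adL g) i0 j0 k0 hik hjk hγ
  · -- Case 2: every bracket lies in the span of its arguments
    push_neg at hcase
    set b := Module.finBasis ℝ g with hb
    have hex : ∃ i j, ⁅b i, b j⁆ ≠ 0 := by
      by_contra h
      push_neg at h
      obtain ⟨X, Y, hXY⟩ := hnab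
      apply hXY
      have hX := b.sum_repr X
      have hY := b.sum_repr Y
      have h' : ∀ i j, adL g (b i) (b j) = 0 := fun i j => by rw [adL_apply]; exact h i j
      have hz : adL g X Y = 0 := by
        rw [← hX, ← hY]
        simp only [map_sum, map_smul, LinearMap.coe_sum, Finset.sum_apply,
          LinearMap.smul_apply, h', smul_zero, Finset.sum_const_zero]
      exact hz
    obtain ⟨i0, j0, hij⟩ := hex
    have hk : ∃ k, b.repr ⁅b i0, b j0⁆ k ≠ 0 := by
      by_contra h
      push_neg at h
      exact hij (b.repr.map_eq_zero_iff.mp (Finsupp.ext h))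
    obtain ⟨k0, hk0⟩ := hk
    refine ⟨b, scal_neg_of_pointwise b (adL g) ?_ i0 j0 k0 (by rw [adL_apply]; exact hk0)⟩
    intro k i j
    simp only [adL_apply]
    by_cases hij' : i = j
    · subst hij'
      exact mul_self_nonneg _
    by_cases hjk : j = k
    · subst hjk
      rw [show ⁅b j, b j⁆ = (0 : g) from lie_self _]
      simp
    · have hz : b.repr ⁅b k, b i⁆ j = 0 := by
        obtain ⟨a, c, hac⟩ := Submodule.mem_span_pair.mp (hcase (b k) (b i))
        rw [← hac]
        have hkj' : k ≠ j := fun h => hjk h.symm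
        have hij'' : i ≠ j := hij'
        simp [Module.Basis.repr_self, Finsupp.single_apply, hkj', hij'']
      rw [hz, zero_mul]

end
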